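/- If λ and μ are adjacent vertices of the partition graph G_n, then h(λ) ≠ h(μ), where h denotes the height function. In particular, every edge of G_n admits a unique orientation from its endpoint of smaller height to its endpoint of larger height. -/

import Mathlib

/-- One partition is obtained from another by an elementary unit transfer:
pick two (occurrences of) parts, increase one by 1 and decrease the other by 1,
deleting the latter if it becomes 0.  Since a partition is recorded as a
multiset of parts, reordering into nonincreasing form is automatic. -/
def UnitTransfer {n : ℕ} (p q : Nat.Partition n) : Prop :=
  ∃ (a b : ℕ) (rest : Multiset ℕ),
    p.parts = a ::ₘ b ::ₘ rest ∧
    q.parts = (a + 1) ::ₘ (if b = 1 then rest else (b - 1) ::ₘ rest)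

/-- The partition graph `G_n`: vertices are partitions of `n`, two distinct
partitions are adjacent when one is obtained from the other by an elementary
unit transfer. -/
def partitionGraph (n : ℕ) : SimpleGraph (Nat.Partition n) :=
  SimpleGraph.fromRel UnitTransfer

/-- Graph distance `d_S(λ) = min_{σ ∈ S} d(λ, σ)` from a vertex to a set. -/
noncomputable def dSet {n : ℕ} (S : Set (Nat.Partition n)) (l : Nat.Partition n) : ℕ :=
  sInf ((fun s => (partitionGraph n).dist l s) '' S)

/-- The parts of a partition listed in nonincreasing order. -/
def sortedParts {n : ℕ} (p : Nat.Partition n) : List ℕ :=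
  (p.parts.sort (· ≤ ·)).reverse

/-- The height `h(λ) = Σ i·λ_i`, where `λ_1 ≥ λ_2 ≥ …` are the parts in
nonincreasing order. -/
def height {n : ℕ} (p : Nat.Partition n) : ℕ :=
  ((sortedParts p).zipIdx.map (fun x => (x.2 + 1) * x.1)).sum

/-- Order-free pair statistic: sum of `min` over all ordered pairs. -/
def pairStat (s : Multiset ℕ) : ℕ := ((s ×ˢ s).map (fun z => min z.1 z.2)).sum

lemma pairStat_cons (x : ℕ) (s : Multiset ℕ) :
    pairStat (x ::ₘ s) = pairStat s + 2 * (s.map (min x)).sum + x := by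
  unfold pairStat
  rw [Multiset.cons_product, Multiset.product_cons, Multiset.map_cons]
  have e1 : Multiset.map ((fun z : ℕ × ℕ => min z.1 z.2) ∘ Prod.mk x) s
      = Multiset.map (min x) s := Multiset.map_congr rfl (fun y _ => rfl)
  have e2 : Multiset.map ((fun z : ℕ × ℕ => min z.1 z.2) ∘ (fun a => (a, x))) s
      = Multiset.map (min x) s := Multiset.map_congr rfl (fun y _ => min_comm y x)
  rw [Multiset.map_add, Multiset.map_add, Multiset.map_cons, Multiset.map_map,
    Multiset.map_map, e1, e2, Multiset.sum_add, Multiset.sum_add, Multiset.sum_cons,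
    min_self]
  ring

lemma pairStat_zero_cons (s : Multiset ℕ) : pairStat (0 ::ₘ s) = pairStat s := by
  rw [pairStat_cons]
  simp [Nat.min_def]

lemma enumFrom_sum_eq (l : List ℕ) (hl : l.Pairwise (· ≥ ·)) : ∀ k : ℕ,
    2 * ((l.zipIdx k).map (fun x => (x.2 + 1) * x.1)).sum
      = 2 * k * l.sum + l.sum + pairStat ↑l := by
  induction l with
  | nil => intro k; simp [pairStat]
  | cons a l ih =>
    intro k
    rw [List.pairwise_cons] at hl
    have hcoe : ((a :: l : List ℕ) : Multiset ℕ) = a ::ₘ (l : Multiset ℕ) := rfl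
    have hmin : ((l : Multiset ℕ).map (min a)).sum = ((l : Multiset ℕ)).sum := by
      have : (l : Multiset ℕ).map (min a) = (l : Multiset ℕ).map id :=
        Multiset.map_congr rfl (fun y hy => min_eq_right (hl.1 y (by exact_mod_cast hy)))
      rw [this, Multiset.map_id]
    have hsum : ((l : Multiset ℕ)).sum = l.sum := by simp
    rw [List.zipIdx_cons, List.map_cons, List.sum_cons, List.sum_cons, hcoe,
      pairStat_cons, hmin, hsum]
    have h2 := ih hl.2 (k + 1)
    show 2 * ((k + 1) * a + ((l.zipIdx (k + 1)).map (fun x => (x.2 + 1) * x.1)).sum)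
      = 2 * k * (a + l.sum) + (a + l.sum) + (pairStat ↑l + 2 * l.sum + a)
    calc 2 * ((k + 1) * a + ((l.zipIdx (k + 1)).map (fun x => (x.2 + 1) * x.1)).sum)
        = 2 * (k + 1) * a
            + 2 * ((l.zipIdx (k + 1)).map (fun x => (x.2 + 1) * x.1)).sum := by ring
      _ = 2 * (k + 1) * a + (2 * (k + 1) * l.sum + l.sum + pairStat ↑l) := by rw [h2]
      _ = 2 * k * (a + l.sum) + (a + l.sum) + (pairStat ↑l + 2 * l.sum + a) := by ring

lemma height_eq {n : ℕ} (p : Nat.Partition n) :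
    2 * height p = n + pairStat p.parts := by
  have h0 : List.Pairwise (fun a b : ℕ => a ≤ b) (p.parts.sort (· ≤ ·)) :=
    Multiset.pairwise_sort _ _
  have hsorted : (sortedParts p).Pairwise (· ≥ ·) := by
    unfold sortedParts
    exact List.pairwise_reverse.2 h0
  have hcoe : ((sortedParts p : List ℕ) : Multiset ℕ) = p.parts := by
    unfold sortedParts
    rw [Multiset.coe_reverse, Multiset.sort_eq]
  have key := enumFrom_sum_eq (sortedParts p) hsorted 0
  unfold height
  rw [key, hcoe]
  have hsum : (sortedParts p).sum = n := by
    have h1 := p.parts_sum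
    rw [← hcoe] at h1
    simpa using h1
  rw [hsum]
  ring

lemma pairStat_transfer_ne (a b : ℕ) (r : Multiset ℕ) (ha : 1 ≤ a) (hb : 1 ≤ b)
    (hne : b ≠ a + 1) :
    pairStat ((a + 1) ::ₘ (b - 1) ::ₘ r) ≠ pairStat (a ::ₘ b ::ₘ r) := by
  rw [pairStat_cons, pairStat_cons, pairStat_cons, pairStat_cons,
    Multiset.map_cons, Multiset.sum_cons, Multiset.map_cons, Multiset.sum_cons]
  rcases lt_or_gt_of_ne hne with hba | hba
  · -- b ≤ a : pairStat strictly decreases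
    have hsum : ((r.map (min (a + 1))).sum + (r.map (min (b - 1))).sum)
        ≤ (r.map (min a)).sum + (r.map (min b)).sum := by
      rw [← Multiset.sum_map_add, ← Multiset.sum_map_add]
      refine Multiset.sum_map_le_sum_map _ _ (fun y _ => ?_)
      simp only [Nat.min_def]
      split_ifs <;> omega
    have h1 : min (a + 1) (b - 1) + 1 ≤ min a b := by
      simp only [Nat.min_def]; split_ifs <;> omega
    omega
  · -- b ≥ a + 2 : pairStat strictly increases
    have hsum : ((r.map (min a)).sum + (r.map (min b)).sum)
        ≤ (r.map (min (a + 1))).sum + (r.map (min (b - 1))).sum := by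
      rw [← Multiset.sum_map_add, ← Multiset.sum_map_add]
      refine Multiset.sum_map_le_sum_map _ _ (fun y _ => ?_)
      simp only [Nat.min_def]
      split_ifs <;> omega
    have h1 : min a b + 1 ≤ min (a + 1) (b - 1) := by
      simp only [Nat.min_def]; split_ifs <;> omega
    omega

lemma height_ne_of_unitTransfer {n : ℕ} (p q : Nat.Partition n)
    (hpq : p ≠ q) (h : UnitTransfer p q) : height p ≠ height q := by
  obtain ⟨a, b, rest, hp, hq⟩ := h
  have ha : 1 ≤ a := p.parts_pos (by rw [hp]; exact Multiset.mem_cons_self _ _)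
  have hb : 1 ≤ b := p.parts_pos (by
    rw [hp]; exact Multiset.mem_cons_of_mem (Multiset.mem_cons_self _ _))
  have hne : b ≠ a + 1 := by
    intro hba
    apply hpq
    apply Nat.Partition.ext
    rw [hp, hq, hba]
    have hb1 : ¬ (a + 1 = 1) := by omega
    rw [if_neg hb1]
    simp only [Nat.add_sub_cancel]
    exact (Multiset.cons_swap _ _ _)
  have hqparts : pairStat q.parts = pairStat ((a + 1) ::ₘ (b - 1) ::ₘ rest) := by
    rw [hq]
    by_cases h1 : b = 1
    · rw [if_pos h1, h1]
      simp only [Nat.sub_self]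
      rw [Multiset.cons_swap, pairStat_zero_cons]
    · rw [if_neg h1]
  intro hcontra
  have h2 : 2 * height p = 2 * height q := by omega
  rw [height_eq, height_eq, hp, hqparts] at h2
  exact pairStat_transfer_ne a b rest ha hb hne (by omega)

theorem height_ne_of_adj {n : ℕ} (l m : Nat.Partition n)
    (h : (partitionGraph n).Adj l m) : height l ≠ height m := by
  obtain ⟨hne, hrel⟩ := h
  rcases hrel with h1 | h1
  · exact height_ne_of_unitTransfer l m hne h1
  · exact (height_ne_of_unitTransfer m l hne.symm h1).symm
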